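/- Suppose a $\pi$-invariant Markov kernel $P$ satisfies, for all nonnegative non-constant $g\in L^2(\pi)$, the spectral-profile-type inequality $\mathcal{E}(P,g) \ge \mathrm{Var}_\pi(g)\cdot F(\pi(g)^2/\mathrm{Var}_\pi(g))$ where $F$ is positive, decreasing, and $\limsup_{v\to0^+}F(v)>0$. Define $F^*(w)=\inf_{v\ge0}\{F(v)+wv\}$. Then for every $f\in L^2(\pi)$ and every $w>0$, setting $s = 2/F^*(w)$ and $\beta(s) = 2w/F^*(w)$, one has the super-Poincaré inequality $\mathrm{Var}_\pi(f) \le s\cdot\mathcal{E}(P,f) + \beta(s)\cdot\pi(|f|)^2$. -/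

import Mathlib

open MeasureTheory ProbabilityTheory Real Filter
open scoped ENNReal

noncomputable section

variable {E : Type*} [MeasurableSpace E]

/-- The Dirichlet form `𝓔(P,f) = ⟨(Id-P)f, f⟩_{L²(π)}`. -/
def dirE (pm : Measure E) (P : Kernel E E) (f : E → ℝ) : ℝ :=
  ∫ x, (f x - ∫ y, f y ∂(P x)) * f x ∂pm

/-- The variance of `f` under `pm`. -/
def var' (pm : Measure E) (f : E → ℝ) : ℝ :=
  ∫ x, (f x - ∫ y, f y ∂pm) ^ 2 ∂pm

/-- The Legendre-type transform `F*(w) = inf_{v ≥ 0} {F(v) + w v}`. -/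
def Fstar (F : ℝ → ℝ) (w : ℝ) : ℝ :=
  sInf {r | ∃ v : ℝ, 0 ≤ v ∧ r = F v + w * v}

lemma auxA_mul_integrable {μ : Measure E} {f g : E → ℝ} (hf : MemLp f 2 μ) (hg : MemLp g 2 μ) :
    Integrable (fun x => f x * g x) μ := by
  refine Integrable.mono' ((hf.integrable_sq.add hg.integrable_sq).div_const 2)
    (hf.aestronglyMeasurable.mul hg.aestronglyMeasurable)
    (Eventually.of_forall fun x => ?_)
  rw [Real.norm_eq_abs, abs_mul]
  simp only [Pi.add_apply]
  nlinarith [abs_nonneg (f x), abs_nonneg (g x), sq_abs (f x), sq_abs (g x),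
    sq_nonneg (|f x| - |g x|)]

lemma auxB_jensen {μ : Measure E} [IsProbabilityMeasure μ] {h : E → ℝ} (hm : MemLp h 2 μ) :
    (∫ x, h x ∂μ) ^ 2 ≤ ∫ x, (h x) ^ 2 ∂μ := by
  set m := ∫ x, h x ∂μ
  have h1 : Integrable h μ := hm.integrable one_le_two
  have h2 : Integrable (fun x => h x ^ 2) μ := hm.integrable_sq
  have key : 0 ≤ ∫ x, (h x - m) ^ 2 ∂μ := integral_nonneg fun x => sq_nonneg _
  have expand : ∫ x, (h x - m) ^ 2 ∂μ = (∫ x, h x ^ 2 ∂μ) - m ^ 2 := by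
    have : ∀ x, (h x - m) ^ 2 = h x ^ 2 - (2 * m * h x - m ^ 2) := fun x => by ring
    simp_rw [this]
    rw [integral_sub h2 (show Integrable (fun x => 2*m*h x - m^2) μ from (h1.const_mul (2*m)).sub (integrable_const (m^2))),
      integral_sub (h1.const_mul (2*m)) (integrable_const (m^2)),
      MeasureTheory.integral_const_mul, integral_const]
    simp only [measure_univ, probReal_univ, ENNReal.toReal_one, smul_eq_mul, one_mul]
    ring
  linarith [expand ▸ key]

section infra
variable (pm : Measure E) [IsProbabilityMeasure pm] (P : Kernel E E) [IsMarkovKernel P]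

lemma auxC_measPg {g : E → ℝ} (hg : Measurable g) :
    StronglyMeasurable (fun x => ∫ y, g y ∂(P x)) :=
  MeasureTheory.StronglyMeasurable.integral_kernel_prod_right (κ := P)
    (f := fun _ y => g y) (hg.stronglyMeasurable.comp_measurable measurable_snd)

lemma auxD_key (hbind : pm.bind ⇑P = pm) {g : E → ℝ} (hg : Measurable g)
    (hL2 : MemLp g 2 pm) :
    (∀ᵐ x ∂pm, MemLp g 2 (P x)) ∧ MemLp (fun x => ∫ y, g y ∂(P x)) 2 pm := by
  set G : E → ℝ≥0∞ := fun y => ENNReal.ofReal (g y ^ 2) with hG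
  have hGmeas : Measurable G := (hg.pow_const 2).ennreal_ofReal
  have hGnorm : ∀ y, G y = ‖g y ^ 2‖ₑ := fun y =>
    (Real.enorm_eq_ofReal (sq_nonneg _)).symm
  have hGfin : ∫⁻ y, G y ∂pm < ⊤ := by
    have h2 := hL2.integrable_sq.hasFiniteIntegral
    rw [HasFiniteIntegral] at h2
    simpa only [hGnorm] using h2
  have houter : Measurable (fun x => ∫⁻ y, G y ∂(P x)) :=
    Measurable.lintegral_kernel_prod_right (f := fun _ y => G y)
      (hGmeas.comp measurable_snd)
  have hlin : ∫⁻ x, ∫⁻ y, G y ∂(P x) ∂pm = ∫⁻ y, G y ∂pm := by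
    conv_rhs => rw [← hbind]
    rw [Measure.lintegral_bind P.measurable.aemeasurable hGmeas.aemeasurable]
  have hfin : ∫⁻ x, ∫⁻ y, G y ∂(P x) ∂pm < ⊤ := by rw [hlin]; exact hGfin
  have haefin : ∀ᵐ x ∂pm, ∫⁻ y, G y ∂(P x) < ⊤ := ae_lt_top houter hfin.ne
  have haeL2 : ∀ᵐ x ∂pm, MemLp g 2 (P x) := by
    filter_upwards [haefin] with x hx
    rw [memLp_two_iff_integrable_sq hg.aestronglyMeasurable]
    refine ⟨(hg.pow_const 2).aestronglyMeasurable, ?_⟩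
    rw [HasFiniteIntegral]
    simpa only [hGnorm] using hx
  refine ⟨haeL2, ?_⟩
  rw [memLp_two_iff_integrable_sq (auxC_measPg P hg).aestronglyMeasurable]
  have hPsm : StronglyMeasurable (fun x => (∫ y, g y ∂(P x)) ^ 2) :=
    (auxC_measPg P hg).pow 2
  refine ⟨hPsm.aestronglyMeasurable, ?_⟩
  rw [HasFiniteIntegral]
  have hbound : ∀ᵐ x ∂pm, ‖(∫ y, g y ∂(P x)) ^ 2‖ₑ ≤ ∫⁻ y, G y ∂(P x) := by
    filter_upwards [haeL2] with x hx
    calc ‖(∫ y, g y ∂(P x)) ^ 2‖ₑ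
        = ENNReal.ofReal ((∫ y, g y ∂(P x)) ^ 2) := Real.enorm_eq_ofReal (sq_nonneg _)
      _ ≤ ENNReal.ofReal (∫ y, g y ^ 2 ∂(P x)) :=
          ENNReal.ofReal_le_ofReal (auxB_jensen hx)
      _ = ∫⁻ y, G y ∂(P x) :=
          ofReal_integral_eq_lintegral_ofReal hx.integrable_sq
            (Eventually.of_forall fun y => sq_nonneg _)
  calc ∫⁻ x, ‖(∫ y, g y ∂(P x)) ^ 2‖ₑ ∂pm
      ≤ ∫⁻ x, ∫⁻ y, G y ∂(P x) ∂pm := lintegral_mono_ae hbound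
    _ < ⊤ := hfin
end infra

section infra2
variable (pm : Measure E) [IsProbabilityMeasure pm] (P : Kernel E E) [IsMarkovKernel P]

lemma auxE_dirE_zero (hbind : pm.bind ⇑P = pm) {g : E → ℝ} (hg : Measurable g)
    (hL2 : MemLp g 2 pm) (hvar : var' pm g = 0) : dirE pm P g = 0 := by
  set m := ∫ x, g x ∂pm with hm
  have hae : g =ᵐ[pm] fun _ => m := by
    have hint : Integrable (fun x => (g x - m) ^ 2) pm :=
      (hL2.sub (memLp_const m)).integrable_sq
    have h0 : (fun x => (g x - m) ^ 2) =ᵐ[pm] 0 :=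
      (integral_eq_zero_iff_of_nonneg (fun x => sq_nonneg _) hint).mp hvar
    filter_upwards [h0] with x hx
    have : (g x - m) ^ 2 = 0 := hx
    have := pow_eq_zero_iff (n := 2) (by norm_num) |>.mp this
    linarith [this]
  set H : E → ℝ≥0∞ := fun y => ENNReal.ofReal |g y - m| with hH
  have hHmeas : Measurable H := ((hg.sub measurable_const).abs).ennreal_ofReal
  have hH0 : ∫⁻ y, H y ∂pm = 0 := by
    have : H =ᵐ[pm] 0 := by
      filter_upwards [hae] with x hx
      simp [H, hx]
    rw [lintegral_congr_ae this]
    simp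
  have houter : Measurable (fun x => ∫⁻ y, H y ∂(P x)) :=
    Measurable.lintegral_kernel_prod_right (f := fun _ y => H y)
      (hHmeas.comp measurable_snd)
  have hlin : ∫⁻ x, ∫⁻ y, H y ∂(P x) ∂pm = 0 := by
    rw [← Measure.lintegral_bind P.measurable.aemeasurable hHmeas.aemeasurable, hbind]
    exact hH0
  have haein : ∀ᵐ x ∂pm, ∫⁻ y, H y ∂(P x) = 0 :=
    (lintegral_eq_zero_iff houter).mp hlin
  have hPae : ∀ᵐ x ∂pm, (∫ y, g y ∂(P x)) = m := by
    filter_upwards [haein] with x hx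
    have : ∀ᵐ y ∂(P x), H y = 0 := (lintegral_eq_zero_iff hHmeas).mp hx
    have hgae : g =ᵐ[P x] fun _ => m := by
      filter_upwards [this] with y hy
      have : ENNReal.ofReal |g y - m| = 0 := hy
      have habs : |g y - m| ≤ 0 := by
        by_contra hc
        push_neg at hc
        exact (ENNReal.ofReal_pos.mpr hc).ne' this
      have h0 : g y - m = 0 := abs_nonpos_iff.mp habs
      simpa [sub_eq_zero] using h0
    rw [integral_congr_ae hgae, integral_const]
    simp
  unfold dirE
  have : (fun x => (g x - ∫ y, g y ∂(P x)) * g x) =ᵐ[pm] 0 := by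
    filter_upwards [hae, hPae] with x h1 h2
    simp [h1, h2]
  rw [integral_congr_ae this]
  simp

end infra2

/-- From a spectral-profile-type inequality to a super-Poincaré inequality, with
`s = 2/F*(w)` and `β(s) = 2w/F*(w)`. -/
theorem stmt18 (pm : Measure E) [IsProbabilityMeasure pm]
    (P : Kernel E E) [IsMarkovKernel P]
    (hinv : ∀ A : Set E, MeasurableSet A → ∫⁻ x, P x A ∂pm = pm A)
    (F : ℝ → ℝ) (hFpos : ∀ v, 0 ≤ v → 0 < F v) (hFdec : AntitoneOn F (Set.Ici 0))
    (hFlim : ∃ c > 0, ∃ᶠ v in nhdsWithin 0 (Set.Ioi 0), c ≤ F v)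
    (hSP : ∀ g : E → ℝ, Measurable g → MemLp g 2 pm → (∀ x, 0 ≤ g x) →
      0 < var' pm g →
      var' pm g * F ((∫ x, g x ∂pm) ^ 2 / var' pm g) ≤ dirE pm P g)
    (f : E → ℝ) (hfmeas : Measurable f) (hfL2 : MemLp f 2 pm)
    (w : ℝ) (hw : 0 < w) :
    var' pm f ≤ (2 / Fstar F w) * dirE pm P f +
      (2 * w / Fstar F w) * (∫ x, |f x| ∂pm) ^ 2 := by
  -- Fstar facts
  set s := Fstar F w with hs_def
  have hset_ne : {r | ∃ v : ℝ, 0 ≤ v ∧ r = F v + w * v}.Nonempty :=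
    ⟨F 0 + w * 0, 0, le_refl 0, rfl⟩
  have hbdd : BddBelow {r | ∃ v : ℝ, 0 ≤ v ∧ r = F v + w * v} := by
    refine ⟨0, fun r hr => ?_⟩
    obtain ⟨v, hv, rfl⟩ := hr
    have := hFpos v hv
    nlinarith
  have hle : ∀ v : ℝ, 0 ≤ v → s ≤ F v + w * v := fun v hv =>
    csInf_le hbdd ⟨v, hv, rfl⟩
  have hs_pos : 0 < s := by
    obtain ⟨c, hc, hfreq⟩ := hFlim
    obtain ⟨v₀, hcv₀, hv₀⟩ := (hfreq.and_eventually eventually_mem_nhdsWithin).exists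
    have hv₀pos : 0 < v₀ := hv₀
    refine lt_of_lt_of_le (show (0:ℝ) < min c (w * v₀) by positivity) (le_csInf hset_ne ?_)
    rintro r ⟨v, hv, rfl⟩
    rcases le_total v v₀ with hvv | hvv
    · have : F v₀ ≤ F v := hFdec hv hv₀pos.le hvv
      have := min_le_left c (w * v₀)
      nlinarith
    · have : w * v₀ ≤ w * v := by nlinarith
      have h2 := (hFpos v hv).le
      have := min_le_right c (w * v₀)
      nlinarith
  -- kernel invariance
  have hbind : pm.bind ⇑P = pm := by
    refine Measure.ext fun A hA => ?_
    rw [Measure.bind_apply hA P.measurable.aemeasurable]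
    exact hinv A hA
  -- per-part estimate
  have perpart : ∀ g : E → ℝ, Measurable g → MemLp g 2 pm → (∀ x, 0 ≤ g x) →
      var' pm g ≤ (1/s) * dirE pm P g + (w/s) * (∫ x, g x ∂pm) ^ 2 := by
    intro g hg hL2 hpos
    have hVnn : 0 ≤ var' pm g := integral_nonneg fun x => sq_nonneg _
    rcases hVnn.lt_or_eq with hV | hV
    · set V := var' pm g with hVdef
      set u := (∫ x, g x ∂pm) ^ 2 with hu
      have hunn : 0 ≤ u := sq_nonneg _
      set v := u / V with hv
      have hvnn : 0 ≤ v := div_nonneg hunn hVnn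
      have hVv : V * v = u := by rw [hv]; field_simp
      have hSP' := hSP g hg hL2 hpos hV
      have hlev := hle v hvnn
      have h3 : V * s ≤ dirE pm P g + w * u := by nlinarith
      have hD : V ≤ (dirE pm P g + w * u) / s := by
        rw [le_div_iff₀ hs_pos]
        exact h3
      calc V ≤ (dirE pm P g + w * u) / s := hD
        _ = (1/s) * dirE pm P g + (w/s) * u := by ring
    · rw [← hV]
      have hd0 : dirE pm P g = 0 := auxE_dirE_zero pm P hbind hg hL2 hV.symm
      rw [hd0]
      positivity
  -- decomposition
  set fp := fun x => max (f x) 0 with hfp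
  set fm := fun x => max (-f x) 0 with hfm
  have hfp_meas : Measurable fp := hfmeas.max measurable_const
  have hfm_meas : Measurable fm := hfmeas.neg.max measurable_const
  have hfp_nn : ∀ x, 0 ≤ fp x := fun x => le_max_right _ _
  have hfm_nn : ∀ x, 0 ≤ fm x := fun x => le_max_right _ _
  have hsplit : ∀ x, f x = fp x - fm x := fun x => by
    simp only [hfp, hfm]; rcases le_total (f x) 0 with h | h
    · rw [max_eq_right h, max_eq_left (by linarith)]; ring
    · rw [max_eq_left h, max_eq_right (by linarith)]; ring
  have habs : ∀ x, |f x| = fp x + fm x := fun x => by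
    simp only [hfp, hfm]; rcases le_total (f x) 0 with h | h
    · rw [max_eq_right h, max_eq_left (by linarith), abs_of_nonpos h]; ring
    · rw [max_eq_left h, max_eq_right (by linarith), abs_of_nonneg h]; ring
  have hmulpm : ∀ x, fp x * fm x = 0 := fun x => by
    simp only [hfp, hfm]; rcases le_total (f x) 0 with h | h
    · rw [max_eq_right h]; ring
    · rw [max_eq_right (by linarith : -f x ≤ 0)]; ring
  have hfpL2 : MemLp fp 2 pm := by
    refine hfL2.of_le hfp_meas.aestronglyMeasurable (Eventually.of_forall fun x => ?_)
    simp only [hfp, Real.norm_eq_abs]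
    rcases le_total (f x) 0 with h | h
    · rw [max_eq_right h]; simp [abs_nonneg]
    · rw [max_eq_left h]
  have hfmL2 : MemLp fm 2 pm := by
    refine hfL2.of_le hfm_meas.aestronglyMeasurable (Eventually.of_forall fun x => ?_)
    simp only [hfm, Real.norm_eq_abs]
    rcases le_total (f x) 0 with h | h
    · rw [max_eq_left (by linarith)]; rw [abs_neg]
    · rw [max_eq_right (by linarith)]; simp [abs_nonneg]
  -- integrals
  have hfp_int : Integrable fp pm := hfpL2.integrable one_le_two
  have hfm_int : Integrable fm pm := hfmL2.integrable one_le_two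
  set a := ∫ x, fp x ∂pm with ha_def
  set b := ∫ x, fm x ∂pm with hb_def
  have ha : 0 ≤ a := integral_nonneg hfp_nn
  have hb : 0 ≤ b := integral_nonneg hfm_nn
  have hmf : ∫ x, f x ∂pm = a - b := by
    rw [show f = fun x => fp x - fm x from funext hsplit]
    exact integral_sub hfp_int hfm_int
  have habs_int : ∫ x, |f x| ∂pm = a + b := by
    rw [show (fun x => |f x|) = fun x => fp x + fm x from funext habs]
    exact integral_add hfp_int hfm_int
  -- variance splitting
  have hvar2 : var' pm f ≤ 2 * var' pm fp + 2 * var' pm fm := by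
    unfold var'
    rw [hmf]
    have hintL : Integrable (fun x => (f x - (a - b)) ^ 2) pm :=
      (hfL2.sub (memLp_const _)).integrable_sq
    have hintp : Integrable (fun x => (fp x - a) ^ 2) pm :=
      (hfpL2.sub (memLp_const _)).integrable_sq
    have hintm : Integrable (fun x => (fm x - b) ^ 2) pm :=
      (hfmL2.sub (memLp_const _)).integrable_sq
    have hintR : Integrable (fun x => 2 * (fp x - a) ^ 2 + 2 * (fm x - b) ^ 2) pm :=
      (hintp.const_mul 2).add (hintm.const_mul 2)
    calc ∫ x, (f x - (a - b)) ^ 2 ∂pm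
        ≤ ∫ x, (2 * (fp x - a) ^ 2 + 2 * (fm x - b) ^ 2) ∂pm := by
          refine integral_mono hintL hintR fun x => ?_
          dsimp only
          rw [hsplit x]
          nlinarith [sq_nonneg (fp x - a + (fm x - b))]
      _ = 2 * ∫ x, (fp x - a) ^ 2 ∂pm + 2 * ∫ x, (fm x - b) ^ 2 ∂pm := by
          rw [integral_add (hintp.const_mul 2) (hintm.const_mul 2),
            MeasureTheory.integral_const_mul, MeasureTheory.integral_const_mul]
  -- Dirichlet superadditivity
  have hkeyp := auxD_key pm P hbind hfp_meas hfpL2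
  have hkeym := auxD_key pm P hbind hfm_meas hfmL2
  have hkeyf := auxD_key pm P hbind hfmeas hfL2
  set p := fun x => ∫ y, fp y ∂(P x) with hp_def
  set q := fun x => ∫ y, fm y ∂(P x) with hq_def
  have hpL2 : MemLp p 2 pm := hkeyp.2
  have hqL2 : MemLp q 2 pm := hkeym.2
  have hp_nn : ∀ x, 0 ≤ p x := fun x => integral_nonneg hfp_nn
  have hq_nn : ∀ x, 0 ≤ q x := fun x => integral_nonneg hfm_nn
  have hPsplit : ∀ᵐ x ∂pm, (∫ y, f y ∂(P x)) = p x - q x := by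
    filter_upwards [hkeyf.1] with x hx
    have hint : Integrable f (P x) := hx.integrable one_le_two
    have h1 : Integrable fp (P x) := hint.pos_part
    have h2 : Integrable fm (P x) := hint.neg.pos_part
    rw [show f = fun y => fp y - fm y from funext hsplit]
    exact integral_sub h1 h2
  have hdir_split : dirE pm P fp + dirE pm P fm +
      ∫ x, (p x * fm x + q x * fp x) ∂pm = dirE pm P f := by
    unfold dirE
    have hI1 : Integrable (fun x => (fp x - p x) * fp x) pm :=
      auxA_mul_integrable (hfpL2.sub hpL2) hfpL2
    have hI2 : Integrable (fun x => (fm x - q x) * fm x) pm :=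
      auxA_mul_integrable (hfmL2.sub hqL2) hfmL2
    have hI3 : Integrable (fun x => p x * fm x + q x * fp x) pm :=
      (auxA_mul_integrable hpL2 hfmL2).add (auxA_mul_integrable hqL2 hfpL2)
    have hcong : (fun x => (f x - ∫ y, f y ∂(P x)) * f x) =ᵐ[pm]
        fun x => (fp x - p x) * fp x + (fm x - q x) * fm x +
          (p x * fm x + q x * fp x) := by
      filter_upwards [hPsplit] with x hx
      rw [hx, hsplit x]
      have := hmulpm x
      ring_nf
      nlinarith [hmulpm x]
    have hI12 : Integrable (fun x => (fp x - p x) * fp x + (fm x - q x) * fm x) pm :=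
      hI1.add hI2
    rw [integral_congr_ae hcong, integral_add hI12 hI3, integral_add hI1 hI2]
  have hcross : 0 ≤ ∫ x, (p x * fm x + q x * fp x) ∂pm :=
    integral_nonneg fun x => add_nonneg (mul_nonneg (hp_nn x) (hfm_nn x))
      (mul_nonneg (hq_nn x) (hfp_nn x))
  have hsum_dir : dirE pm P fp + dirE pm P fm ≤ dirE pm P f := by linarith
  -- assemble
  have e1 := perpart fp hfp_meas hfpL2 hfp_nn
  have e2 := perpart fm hfm_meas hfmL2 hfm_nn
  rw [habs_int]
  have hsq : a ^ 2 + b ^ 2 ≤ (a + b) ^ 2 := by nlinarith [mul_nonneg ha hb]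
  have hc1 : (0:ℝ) ≤ 2 / s := by positivity
  have hc2 : (0:ℝ) ≤ 2 * w / s := by positivity
  calc var' pm f ≤ 2 * var' pm fp + 2 * var' pm fm := hvar2
    _ ≤ 2 * ((1/s) * dirE pm P fp + (w/s) * a ^ 2) +
        2 * ((1/s) * dirE pm P fm + (w/s) * b ^ 2) := by linarith
    _ = (2 / s) * (dirE pm P fp + dirE pm P fm) + (2 * w / s) * (a ^ 2 + b ^ 2) := by
        ring
    _ ≤ (2 / s) * dirE pm P f + (2 * w / s) * (a + b) ^ 2 := by
        gcongr
    _ = (2 / s) * dirE pm P f + (2 * w / s) * (a + b) ^ 2 := rfl
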